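/- Let R be a Bézout domain (an integral domain in which every finitely generated ideal is principal) of finite Krull dimension. Then R is radically finite if and only if R is a principal ideal domain. -/

import Mathlib

/-- The height of an ideal `I`: the infimum of the heights (in the prime spectrum)
of the prime ideals containing `I`. -/
noncomputable def idealHeight (R : Type*) [CommRing R] (I : Ideal R) : ℕ∞ :=
  ⨅ P : {P : PrimeSpectrum R // I ≤ P.asIdeal}, Order.height P.1

/-- An ideal `I` is radically perfect if its height equals the least number `n` such that
`√I` is the radical of an ideal generated by `n` elements, and moreover, if `ht I = 0`,
then `√I` is the radical of a principal ideal generated by a zero divisor. -/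
def RadicallyPerfect {R : Type*} [CommRing R] (I : Ideal R) : Prop :=
  idealHeight R I = sInf {n : ℕ∞ | ∃ s : Finset R,
      (s.card : ℕ∞) = n ∧ (Ideal.span (s : Set R)).radical = I.radical} ∧
    (idealHeight R I = 0 → ∃ θ : R, θ ∉ nonZeroDivisors R ∧
      I.radical = (Ideal.span {θ} : Ideal R).radical)

/-- The set of ideals of `R` generated by `ht P` elements whose radical equals `P`. -/
def genHtRad {R : Type*} [CommRing R] (P : Ideal R) : Set (Ideal R) :=
  {A | ∃ s : Finset R, (s.card : ℕ∞) = idealHeight R P ∧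
    Ideal.span (s : Set R) = A ∧ A.radical = P}

/-- A commutative ring `R` is radically finite if every prime ideal `P` of `R` is radically
perfect, the set of ideals generated by `ht P` elements with radical `P` has a maximal
member `A`, and every chain of ideals between `A` and `P` is finite. -/
def RadicallyFinite (R : Type*) [CommRing R] : Prop :=
  ∀ P : Ideal R, P.IsPrime → RadicallyPerfect P ∧
    ∃ A ∈ genHtRad P, (∀ B ∈ genHtRad P, A ≤ B → B = A) ∧
      ∀ C : Set (Ideal R), IsChain (· ≤ ·) C → C ⊆ Set.Icc A P → C.Finite

/-- A ring is of finite character if each nonzero element lies in only finitely many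
maximal ideals. -/
def FiniteCharacter (R : Type*) [CommRing R] : Prop :=
  ∀ x : R, x ≠ 0 → {M : Ideal R | M.IsMaximal ∧ x ∈ M}.Finite

/-- A Bézout domain of finite Krull dimension is radically finite if and only if it is
a principal ideal domain. -/
lemma idealHeight_prime_eq {R : Type*} [CommRing R] (P : Ideal R) (hP : P.IsPrime) :
    idealHeight R P = Order.height (⟨P, hP⟩ : PrimeSpectrum R) := by
  unfold idealHeight
  apply le_antisymm
  · exact iInf_le (fun Q : {Q : PrimeSpectrum R // P ≤ Q.asIdeal} => Order.height Q.1)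
      ⟨⟨P, hP⟩, le_rfl⟩
  · exact le_iInf fun Q => Order.height_mono ((PrimeSpectrum.asIdeal_le_asIdeal _ _).mp Q.2)

lemma isMin_bot_primeSpectrum {R : Type*} [CommRing R] [IsDomain R] :
    IsMin (⟨⊥, Ideal.bot_prime⟩ : PrimeSpectrum R) := by
  intro b hb
  rw [← PrimeSpectrum.asIdeal_le_asIdeal]
  exact bot_le

lemma idealHeight_bot {R : Type*} [CommRing R] [IsDomain R] :
    idealHeight R (⊥ : Ideal R) = 0 := by
  rw [idealHeight_prime_eq (⊥ : Ideal R) Ideal.bot_prime, Order.height_eq_zero]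
  exact isMin_bot_primeSpectrum

lemma idealHeight_prime_pid {R : Type*} [CommRing R] [IsDomain R] [IsPrincipalIdealRing R]
    {P : Ideal R} (hP : P.IsPrime) (hP0 : P ≠ ⊥) : idealHeight R P = 1 := by
  rw [idealHeight_prime_eq P hP]
  apply le_antisymm
  · have := Order.height_le_coe_iff (x := (⟨P, hP⟩ : PrimeSpectrum R)) (n := 1)
    rw [Nat.cast_one] at this
    rw [this]
    intro Q hQ
    by_cases hQ0 : Q.asIdeal = ⊥
    · have : Order.height Q = 0 := by
        rw [Order.height_eq_zero]
        intro b hb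
        rw [← PrimeSpectrum.asIdeal_le_asIdeal, hQ0]
        exact bot_le
      rw [this]; exact zero_lt_one
    · exfalso
      haveI := Q.isPrime
      have hmax := IsPrime.to_maximal_ideal hQ0
      have hlt : Q.asIdeal < P := (PrimeSpectrum.asIdeal_lt_asIdeal _ _).mpr hQ
      exact hP.ne_top (hmax.1.2 P hlt)
  · rw [ENat.one_le_iff_ne_zero, Ne, Order.height_eq_zero]
    intro hmin
    have hlt : (⟨⊥, Ideal.bot_prime⟩ : PrimeSpectrum R) < ⟨P, hP⟩ :=
      (PrimeSpectrum.asIdeal_lt_asIdeal _ _).mp (bot_lt_iff_ne_bot.mpr hP0)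
    exact absurd (hmin hlt.le) (not_le_of_gt hlt)

theorem bezout_radicallyFinite_iff {R : Type*} [CommRing R] [IsDomain R] [IsBezout R]
    (hdim : ringKrullDim R < ⊤) :
    RadicallyFinite R ↔ IsPrincipalIdealRing R := by
  constructor
  · intro hRF
    apply IsPrincipalIdealRing.of_prime
    intro P hP
    obtain ⟨⟨hht, hzero⟩, A, ⟨s, hcard, hspan, hrad⟩, hmax, -⟩ := hRF P hP
    obtain ⟨a, ha⟩ := IsBezout.isPrincipal_of_FG A ⟨s, hspan⟩
    have hAa : A = Ideal.span {a} := ha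
    have h1S : (1 : ℕ∞) ∈ {n : ℕ∞ | ∃ s : Finset R,
        (s.card : ℕ∞) = n ∧ (Ideal.span (s : Set R)).radical = P.radical} := by
      refine ⟨{a}, by simp, ?_⟩
      rw [Finset.coe_singleton, ← hAa, hrad, hP.radical]
    by_cases hP0 : P = ⊥
    · exact ⟨0, by rw [hP0]; exact (Submodule.span_zero_singleton R).symm⟩
    · have hne : idealHeight R P ≠ 0 := by
        intro h0
        obtain ⟨θ, hθ, hradθ⟩ := hzero h0
        have hθ0 : θ = 0 := by
          by_contra h
          exact hθ (mem_nonZeroDivisors_iff_ne_zero.mpr h)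
        rw [hθ0] at hradθ
        apply hP0
        have : P.radical = (⊥ : Ideal R).radical := by
          rw [hradθ]; congr 1; simp
        rw [hP.radical, Ideal.bot_prime.radical] at this
        exact this
      have hht1 : idealHeight R P = 1 :=
        le_antisymm (hht ▸ sInf_le h1S) (ENat.one_le_iff_ne_zero.mpr hne)
      have hAP : A ≤ P := hrad ▸ Ideal.le_radical
      have hPA : P ≤ A := by
        intro x hx
        have hBfg : (A ⊔ Ideal.span {x}).FG :=
          Submodule.FG.sup ⟨s, hspan⟩ (Submodule.fg_span_singleton x)
        obtain ⟨b, hb⟩ := IsBezout.isPrincipal_of_FG _ hBfg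
        have hbB : A ⊔ Ideal.span {x} = Ideal.span {b} := hb
        have hBP : A ⊔ Ideal.span {x} ≤ P :=
          sup_le hAP ((Ideal.span_singleton_le_iff_mem P).mpr hx)
        have hBrad : (A ⊔ Ideal.span {x}).radical = P :=
          le_antisymm (hP.radical ▸ Ideal.radical_mono hBP)
            (hrad ▸ Ideal.radical_mono le_sup_left)
        have hBmem : (A ⊔ Ideal.span {x}) ∈ genHtRad P := by
          refine ⟨{b}, ?_, by rw [Finset.coe_singleton, ← hbB], hBrad⟩
          rw [Finset.card_singleton, Nat.cast_one, hht1]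
        have hBA := hmax _ hBmem le_sup_left
        have : x ∈ A ⊔ Ideal.span {x} :=
          Submodule.mem_sup_right (Ideal.mem_span_singleton_self x)
        rwa [hBA] at this
      exact ⟨a, by rw [← le_antisymm hAP hPA]; exact ha⟩
  · intro hPIR P hP
    by_cases hP0 : P = ⊥
    · subst hP0
      have hradbot : (⊥ : Ideal R).radical = ⊥ := Ideal.bot_prime.radical
      have hht0 : idealHeight R (⊥ : Ideal R) = 0 := idealHeight_bot
      have hbotmem : (⊥ : Ideal R) ∈ genHtRad (⊥ : Ideal R) :=
        ⟨∅, by simp [hht0], by simp, hradbot⟩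
      refine ⟨⟨?_, fun _ => ⟨0, zero_notMem_nonZeroDivisors, by
        rw [Ideal.span_singleton_eq_bot.mpr rfl]⟩⟩, ⊥, hbotmem, ?_, ?_⟩
      · have hz : (0 : ℕ∞) ∈ {n : ℕ∞ | ∃ s : Finset R,
            (s.card : ℕ∞) = n ∧ (Ideal.span (s : Set R)).radical = (⊥ : Ideal R).radical} :=
          ⟨∅, by simp, by rw [Finset.coe_empty, Ideal.span_empty]⟩
        rw [hht0]
        exact (le_antisymm (sInf_le hz) zero_le).symm
      · intro B hB _
        obtain ⟨t, -, -, hradB⟩ := hB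
        exact le_bot_iff.mp (le_trans Ideal.le_radical hradB.le)
      · intro C hC hsub
        refine Set.Finite.subset (Set.finite_singleton ⊥) ?_
        rwa [← Set.Icc_self]
    · obtain ⟨p, hp⟩ := (hPIR.principal P)
      have hp' : P = Ideal.span {p} := hp
      have hht1 : idealHeight R P = 1 := idealHeight_prime_pid hP hP0
      have hmem1 : (1 : ℕ∞) ∈ {n : ℕ∞ | ∃ s : Finset R,
          (s.card : ℕ∞) = n ∧ (Ideal.span (s : Set R)).radical = P.radical} :=
        ⟨{p}, by simp, by rw [Finset.coe_singleton, ← hp']⟩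
      have hsinf : sInf {n : ℕ∞ | ∃ s : Finset R,
          (s.card : ℕ∞) = n ∧ (Ideal.span (s : Set R)).radical = P.radical} = 1 := by
        refine le_antisymm (sInf_le hmem1) (le_sInf ?_)
        rintro n ⟨t, hcard, hradeq⟩
        rw [ENat.one_le_iff_ne_zero]
        rintro rfl
        have ht0 : t = ∅ := Finset.card_eq_zero.mp (by exact_mod_cast hcard)
        rw [ht0, Finset.coe_empty, Ideal.span_empty, Ideal.bot_prime.radical,
          hP.radical] at hradeq
        exact hP0 hradeq.symm
      have hPmem : P ∈ genHtRad P :=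
        ⟨{p}, by simp [hht1], by rw [Finset.coe_singleton, ← hp'], hP.radical⟩
      refine ⟨⟨hht1.trans hsinf.symm, fun h0 => absurd (hht1 ▸ h0) one_ne_zero⟩, P,
        hPmem, ?_, ?_⟩
      · intro B hB hPB
        obtain ⟨t, -, -, hradB⟩ := hB
        exact le_antisymm (hradB ▸ Ideal.le_radical) hPB
      · intro C hC hsub
        refine Set.Finite.subset (Set.finite_singleton P) ?_
        rwa [← Set.Icc_self]
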